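/- For any graph G on n vertices with adjacency matrix eigenvalues μ₁ ≥ ... ≥ μ_n and any partition [n] = P₁ ∪ ... ∪ P_k into nonempty sets, we have μ₁ + ... + μ_k ≥ Σᵢ 2e(Pᵢ)/|Pᵢ|, where e(Pᵢ) is the number of edges of G inside Pᵢ. -/

import Mathlib

open Matrix

section Aux

variable {n : ℕ} {A : Matrix (Fin n) (Fin n) ℝ} (hA : A.IsHermitian) (x : Fin n → ℝ)

lemma star_U_eq : star (hA.eigenvectorUnitary : Matrix (Fin n) (Fin n) ℝ)
    = (hA.eigenvectorUnitary : Matrix (Fin n) (Fin n) ℝ)ᵀ := by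
  rw [Matrix.star_eq_conjTranspose, conjTranspose_eq_transpose_of_trivial]

lemma vecMul_U : x ᵥ* (hA.eigenvectorUnitary : Matrix (Fin n) (Fin n) ℝ)
    = star (hA.eigenvectorUnitary : Matrix (Fin n) (Fin n) ℝ) *ᵥ x := by
  rw [star_U_eq, Matrix.mulVec_transpose]

lemma quadform_eq :
    x ⬝ᵥ (A *ᵥ x) = ∑ j, hA.eigenvalues j *
      ((star (hA.eigenvectorUnitary : Matrix (Fin n) (Fin n) ℝ) *ᵥ x) j)^2 := by
  conv_lhs => rw [hA.spectral_theorem, Unitary.conjStarAlgAut_apply]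
  rw [← Matrix.mulVec_mulVec, ← Matrix.mulVec_mulVec, Matrix.dotProduct_mulVec, vecMul_U]
  unfold dotProduct
  congr 1; ext j
  rw [Matrix.mulVec_diagonal]
  show _ * (RCLike.ofReal (hA.eigenvalues j) * _) = _
  rw [show RCLike.ofReal (hA.eigenvalues j) = hA.eigenvalues j from rfl]
  ring

lemma parseval_eq :
    ∑ j, ((star (hA.eigenvectorUnitary : Matrix (Fin n) (Fin n) ℝ) *ᵥ x) j)^2
      = ∑ v, (x v)^2 := by
  have hu : (hA.eigenvectorUnitary : Matrix (Fin n) (Fin n) ℝ) *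
      star (hA.eigenvectorUnitary : Matrix (Fin n) (Fin n) ℝ) = 1 :=
    (Matrix.mem_unitaryGroup_iff).mp hA.eigenvectorUnitary.2
  have h1 : (star (hA.eigenvectorUnitary : Matrix (Fin n) (Fin n) ℝ) *ᵥ x) ⬝ᵥ
      (star (hA.eigenvectorUnitary : Matrix (Fin n) (Fin n) ℝ) *ᵥ x) = x ⬝ᵥ x := by
    nth_rewrite 1 [show star (hA.eigenvectorUnitary : Matrix (Fin n) (Fin n) ℝ) *ᵥ x
      = x ᵥ* (hA.eigenvectorUnitary : Matrix (Fin n) (Fin n) ℝ) from (vecMul_U hA x).symm]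
    rw [← Matrix.dotProduct_mulVec, Matrix.mulVec_mulVec, hu, Matrix.one_mulVec]
  simpa [dotProduct, sq] using h1

lemma w_apply (j : Fin n) :
    (star (hA.eigenvectorUnitary : Matrix (Fin n) (Fin n) ℝ) *ᵥ x) j
      = ∑ v, (hA.eigenvectorBasis j) v * x v := by
  rw [star_U_eq]
  simp [Matrix.mulVec, dotProduct]

lemma eigvec_norm (j : Fin n) : ∑ v, ((hA.eigenvectorBasis j) v)^2 = 1 := by
  have h := hA.eigenvectorBasis.orthonormal.1 j
  have h2 : (inner ℝ (hA.eigenvectorBasis j) (hA.eigenvectorBasis j) : ℝ) = 1 := by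
    rw [real_inner_self_eq_norm_sq, h]; norm_num
  rw [PiLp.inner_apply] at h2
  simpa [sq] using h2

end Aux

/-- Ky Fan combinatorial step. -/
lemma sorted_sum_le {n k : ℕ} (hkn : k < n) (μ : Fin n → ℝ) (hmono : Antitone μ)
    (d : Fin n → ℝ) (hd0 : ∀ j, 0 ≤ d j) (hd1 : ∀ j, d j ≤ 1)
    (hsum : ∑ j, d j = k) :
    ∑ j, μ j * d j ≤ ∑ i : Fin k, μ (Fin.castLE hkn.le i) := by
  classical
  set S : Finset (Fin n) := Finset.univ.filter (fun j => (j : ℕ) < k) with hS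
  have hkk : k - 1 < n := lt_of_le_of_lt (Nat.sub_le _ _) hkn
  set t : ℝ := μ ⟨k - 1, hkk⟩ with ht
  have hmemS : ∀ j : Fin n, j ∈ S ↔ (j : ℕ) < k := by intro j; simp [hS]
  have hSmap : S = Finset.univ.map (Fin.castLEEmb hkn.le) := by
    ext j
    simp only [hmemS, Finset.mem_map, Finset.mem_univ, true_and]
    constructor
    · intro hj; exact ⟨⟨j, hj⟩, by simp [Fin.castLEEmb, Fin.ext_iff]⟩
    · rintro ⟨i, rfl⟩; simpa using i.isLt
  have hcard : S.card = k := by simp [hSmap]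
  have htle : ∀ j ∈ S, t ≤ μ j := by
    intro j hj
    exact hmono (by simpa [Fin.le_def] using Nat.le_sub_one_of_lt ((hmemS j).1 hj))
  have hlet : ∀ j ∈ Sᶜ, μ j ≤ t := by
    intro j hj
    apply hmono
    have : ¬ (j : ℕ) < k := by simpa [hmemS] using (Finset.mem_compl.1 hj)
    simp only [Fin.le_def]
    omega
  have hrhs : ∑ j ∈ S, μ j = ∑ i : Fin k, μ (Fin.castLE hkn.le i) := by
    rw [hSmap, Finset.sum_map]; rfl
  have hsplit : ∑ j, μ j * d j = ∑ j ∈ S, μ j * d j + ∑ j ∈ Sᶜ, μ j * d j :=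
    (Finset.sum_add_sum_compl S _).symm
  have hdsplit : ∑ j ∈ Sᶜ, d j = (k : ℝ) - ∑ j ∈ S, d j := by
    have := Finset.sum_add_sum_compl S d
    rw [hsum] at this; linarith
  have h2 : ∑ j ∈ Sᶜ, μ j * d j ≤ t * ((k : ℝ) - ∑ j ∈ S, d j) := by
    rw [← hdsplit, Finset.mul_sum]
    exact Finset.sum_le_sum (fun j hj => mul_le_mul_of_nonneg_right (hlet j hj) (hd0 j))
  have h3 : t * ((k : ℝ) - ∑ j ∈ S, d j) = ∑ j ∈ S, t * (1 - d j) := by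
    have hkS : (k : ℝ) = ∑ _j ∈ S, (1 : ℝ) := by simp [hcard]
    rw [hkS, ← Finset.sum_sub_distrib, Finset.mul_sum]
  have h4 : ∑ j ∈ S, μ j * d j + ∑ j ∈ S, t * (1 - d j) ≤ ∑ j ∈ S, μ j := by
    rw [← Finset.sum_add_distrib]
    apply Finset.sum_le_sum
    intro j hj
    nlinarith [htle j hj, hd0 j, hd1 j]
  calc ∑ j, μ j * d j = ∑ j ∈ S, μ j * d j + ∑ j ∈ Sᶜ, μ j * d j := hsplit
    _ ≤ ∑ j ∈ S, μ j * d j + ∑ j ∈ S, t * (1 - d j) := by rw [h3] at h2; linarith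
    _ ≤ ∑ j ∈ S, μ j := h4
    _ = _ := hrhs

/-- The part of the partition `P : Fin n → Fin k` with index `i`. -/
def partSet {n k : ℕ} (P : Fin n → Fin k) (i : Fin k) : Finset (Fin n) :=
  Finset.univ.filter (fun v => P v = i)

/-- Number of ordered adjacent pairs `(u,v)` with `u ∈ X`, `v ∈ Y`.
For `X = Y` this is `2 e(X)`; for disjoint `X`, `Y` it is `e(X,Y)`. -/
def pairCount {n : ℕ} (G : SimpleGraph (Fin n)) [DecidableRel G.Adj]
    (X Y : Finset (Fin n)) : ℕ :=
  ∑ u ∈ X, ∑ v ∈ Y, if G.Adj u v then 1 else 0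

/-- for a graph `G` on `[n]` with adjacency eigenvalues
`μ 0 ≥ μ 1 ≥ ⋯ ≥ μ (n-1)` and a partition of `[n]` into `k` nonempty parts,
`μ₁ + ⋯ + μ_k ≥ ∑ i, 2 e(P i) / |P i|`. -/
theorem stmt0 {n k : ℕ} (hk : 1 < k) (hkn : k < n)
    (G : SimpleGraph (Fin n)) [DecidableRel G.Adj]
    (hA : (G.adjMatrix ℝ).IsHermitian)
    (μ : Fin n → ℝ) (hmono : Antitone μ)
    (hperm : ∃ σ : Equiv.Perm (Fin n), μ = hA.eigenvalues ∘ σ)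
    (P : Fin n → Fin k) (hsurj : Function.Surjective P) :
    ∑ i : Fin k, (pairCount G (partSet P i) (partSet P i) : ℝ) / (partSet P i).card
      ≤ ∑ i : Fin k, μ (Fin.castLE hkn.le i) := by
  classical
  obtain ⟨σ, hσ⟩ := hperm
  set A : Matrix (Fin n) (Fin n) ℝ := G.adjMatrix ℝ with hAdef
  -- indicator vectors
  set x : Fin k → Fin n → ℝ := fun i v => if v ∈ partSet P i then 1 else 0 with hx
  set m : Fin k → ℝ := fun i => ((partSet P i).card : ℝ) with hm
  have hmpos : ∀ i, 0 < m i := by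
    intro i
    obtain ⟨v, hv⟩ := hsurj i
    have : v ∈ partSet P i := by simp [partSet, hv]
    have h2 := Finset.card_pos.mpr ⟨v, this⟩
    have : (0:ℝ) < ((partSet P i).card : ℝ) := by exact_mod_cast h2
    simpa [hm] using this
  set w : Fin k → Fin n → ℝ := fun i =>
    star (hA.eigenvectorUnitary : Matrix (Fin n) (Fin n) ℝ) *ᵥ x i with hw
  set c : Fin n → ℝ := fun j => ∑ i, (w i j)^2 / m i with hc
  -- pairCount as quadratic form
  have hpair : ∀ i, (pairCount G (partSet P i) (partSet P i) : ℝ)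
      = x i ⬝ᵥ (A *ᵥ x i) := by
    intro i
    have h1 : x i ⬝ᵥ (A *ᵥ x i) = ∑ u ∈ partSet P i, ∑ v ∈ partSet P i, A u v := by
      simp [dotProduct, Matrix.mulVec, hx, ite_mul, mul_ite,
        Finset.sum_ite_mem, Finset.univ_inter]
    rw [h1]
    push_cast [pairCount]
    exact Finset.sum_congr rfl fun u _ => Finset.sum_congr rfl fun v _ => by
      simp [hAdef, SimpleGraph.adjMatrix_apply]
  -- LHS = ∑_j λ_j c_j
  have hLHS : ∑ i : Fin k, (pairCount G (partSet P i) (partSet P i) : ℝ) / (partSet P i).card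
      = ∑ j, hA.eigenvalues j * c j := by
    calc ∑ i : Fin k, (pairCount G (partSet P i) (partSet P i) : ℝ) / (partSet P i).card
        = ∑ i, (∑ j, hA.eigenvalues j * (w i j)^2) / m i := by
          refine Finset.sum_congr rfl fun i _ => ?_
          rw [hpair i, quadform_eq hA (x i)]
      _ = ∑ i, ∑ j, hA.eigenvalues j * ((w i j)^2 / m i) := by
          refine Finset.sum_congr rfl fun i _ => ?_
          rw [Finset.sum_div]
          exact Finset.sum_congr rfl fun j _ => by rw [mul_div_assoc]
      _ = ∑ j, ∑ i, hA.eigenvalues j * ((w i j)^2 / m i) := Finset.sum_comm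
      _ = ∑ j, hA.eigenvalues j * c j := by
          refine Finset.sum_congr rfl fun j _ => ?_
          rw [hc, Finset.mul_sum]
  -- bounds on c
  have hc0 : ∀ j, 0 ≤ c j := by
    intro j
    apply Finset.sum_nonneg
    intro i _
    positivity
  have hc1 : ∀ j, c j ≤ 1 := by
    intro j
    have hstep : ∀ i, (w i j)^2 / m i ≤ ∑ v ∈ partSet P i, ((hA.eigenvectorBasis j) v)^2 := by
      intro i
      rw [div_le_iff₀ (hmpos i)]
      have hwij : w i j = ∑ v ∈ partSet P i, (hA.eigenvectorBasis j) v := by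
        rw [hw]
        show (star (hA.eigenvectorUnitary : Matrix (Fin n) (Fin n) ℝ) *ᵥ x i) j = _
        rw [w_apply hA (x i) j]
        simp [hx, mul_ite, Finset.sum_ite_mem, Finset.univ_inter]
      rw [hwij, mul_comm]
      have hcs := sq_sum_le_card_mul_sum_sq (s := partSet P i)
        (f := fun v => (hA.eigenvectorBasis j) v)
      simpa [hm] using hcs
    calc c j ≤ ∑ i, ∑ v ∈ partSet P i, ((hA.eigenvectorBasis j) v)^2 :=
          Finset.sum_le_sum fun i _ => hstep i
      _ = ∑ v, ((hA.eigenvectorBasis j) v)^2 := Finset.sum_fiberwise _ _ _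
      _ = 1 := eigvec_norm hA j
  have hcsum : ∑ j, c j = (k : ℝ) := by
    rw [hc]
    rw [Finset.sum_comm]
    have : ∀ i, ∑ j, (w i j)^2 / m i = 1 := by
      intro i
      rw [← Finset.sum_div]
      have hpar : ∑ j, (w i j)^2 = ∑ v, (x i v)^2 := parseval_eq hA (x i)
      have hxs : ∑ v, (x i v)^2 = m i := by
        simp [hx, hm, apply_ite (fun r : ℝ => r^2), Finset.sum_ite_mem, Finset.univ_inter]
      rw [hpar, hxs, div_self (hmpos i).ne']
    simp [this]
  -- permute
  have hfinal : ∑ j, hA.eigenvalues j * c j = ∑ j, μ j * c (σ j) := by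
    rw [← Equiv.sum_comp σ (fun j => hA.eigenvalues j * c j)]
    exact Finset.sum_congr rfl fun j _ => by rw [hσ]; rfl
  rw [hLHS, hfinal]
  refine sorted_sum_le hkn μ hmono (fun j => c (σ j)) (fun j => hc0 _) (fun j => hc1 _) ?_
  rw [Equiv.sum_comp σ c, hcsum]
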